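/- arXiv:2006.03873 — 4 statements merged into one kernel-verified Lean document; each statement's English description precedes it below -/
import Mathlib

section
/- Let μ, ε, η be real numbers with η > 0, μ > 0, and ε > μ, and let θ : ℕ → ℝ satisfy the recurrence θ(k+1) = θ(k) + η(μ+ε) if θ(k) < 0, θ(k+1) = θ(k) + ημ if θ(k) = 0, and θ(k+1) = θ(k) + η(μ−ε) if θ(k) > 0. Then for every n ∈ ℕ there exists n₀ ≥ n such that θ(n₀) > 0. -/
/-- If `ε > μ > 0`, the iterates take positive values infinitely often. -/
theorem theta_pos_infinitely_often (μ ε η : ℝ) (hη : 0 < η) (hμ : 0 < μ) (hεμ : μ < ε)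
    (θ : ℕ → ℝ)
    (hrec : ∀ k, θ (k + 1) =
      if θ k < 0 then θ k + η * (μ + ε)
      else if θ k = 0 then θ k + η * μ
      else θ k + η * (μ - ε)) :
    ∀ n : ℕ, ∃ n₀ ≥ n, θ n₀ > 0 := by
  intro n
  by_contra h
  push_neg at h
  -- all iterates from n on are ≤ 0
  have hle : ∀ m, n ≤ m → θ m ≤ 0 := fun m hm => h m hm
  have key : ∀ k : ℕ, θ n + (k : ℝ) * (η * μ) ≤ θ (n + k) := by
    intro k
    induction k with
    | zero => simp
    | succ k ih =>
      have hnk : n ≤ n + k := Nat.le_add_right n k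
      have hθ : θ (n + k) ≤ 0 := hle _ hnk
      have hr := hrec (n + k)
      have hstep : θ (n + k) + η * μ ≤ θ (n + k + 1) := by
        rcases lt_or_eq_of_le hθ with hlt | heq
        · rw [hr, if_pos hlt]
          nlinarith
        · rw [hr, if_neg (by simp [heq]), if_pos heq]
      push_cast
      calc θ n + ((k : ℝ) + 1) * (η * μ) = (θ n + (k : ℝ) * (η * μ)) + η * μ := by ring
        _ ≤ θ (n + k) + η * μ := by linarith
        _ ≤ θ (n + k + 1) := hstep
      |>.trans_eq (by rw [Nat.add_succ])
  -- choose k large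
  obtain ⟨k, hk⟩ := exists_nat_gt ((-θ n) / (η * μ))
  have hημ : 0 < η * μ := mul_pos hη hμ
  have : -θ n < (k : ℝ) * (η * μ) := by
    rwa [div_lt_iff₀ hημ] at hk
  have hpos : 0 < θ (n + k) := by
    have := key k
    linarith
  exact absurd (hle (n + k) (Nat.le_add_right n k)) (not_le.mpr hpos)
end

section
/- Let μ, ε, η be real numbers with η > 0, μ > 0, and ε > μ, and let θ : ℕ → ℝ satisfy the recurrence θ(k+1) = θ(k) + η(μ+ε) if θ(k) < 0, θ(k+1) = θ(k) + ημ if θ(k) = 0, and θ(k+1) = θ(k) + η(μ−ε) if θ(k) > 0. Suppose n₀ < n are indices with θ(n₀) > 0, θ(n) < 0, and θ(m) ≥ 0 for all m with n₀ ≤ m < n (i.e., n is the minimum index greater than n₀ at which the sequence is negative). Then θ(n+1) > 0, and moreover for every k ≥ n, if θ(k) < 0 then θ(k+1) > 0. -/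
/-- Proposition 2: after the first sign change from positive to negative, every
negative parameter value is immediately followed by a positive one. -/
theorem next_is_pos (μ ε η : ℝ) (hη : 0 < η) (hμ : 0 < μ) (hεμ : μ < ε)
    (θ : ℕ → ℝ)
    (hrec : ∀ k, θ (k + 1) =
      if θ k < 0 then θ k + η * (μ + ε)
      else if θ k = 0 then θ k + η * μ
      else θ k + η * (μ - ε))
    (n₀ n : ℕ) (hn₀n : n₀ < n) (hpos : θ n₀ > 0) (hneg : θ n < 0)
    (hmin : ∀ m, n₀ ≤ m → m < n → θ m ≥ 0) :
    θ (n + 1) > 0 ∧ ∀ k ≥ n, θ k < 0 → θ (k + 1) > 0 := by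
  have key : ∀ k, n ≤ k → θ k < 0 → η * (μ - ε) ≤ θ k := by
    intro k hk
    induction k, hk using Nat.le_induction with
    | base =>
      intro _
      obtain ⟨m, rfl⟩ : ∃ m, n = m + 1 := ⟨n - 1, by omega⟩
      have hm : θ m ≥ 0 := hmin m (Nat.le_of_lt_succ hn₀n) (Nat.lt_succ_self m)
      have h := hrec m
      rcases lt_trichotomy (θ m) 0 with h1 | h1 | h1
      · linarith
      · rw [h, if_neg (by linarith), if_pos h1] at hneg; nlinarith
      · rw [hrec m, if_neg (by linarith), if_neg (by linarith)]; linarith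
    | succ k hk ih =>
      intro hneg'
      have h := hrec k
      rcases lt_trichotomy (θ k) 0 with h1 | h1 | h1
      · have := ih h1
        rw [h, if_pos h1] at hneg'; nlinarith
      · rw [h, if_neg (by linarith), if_pos h1] at hneg'; nlinarith
      · rw [hrec k, if_neg (by linarith), if_neg (by linarith)]; linarith
  have main : ∀ k ≥ n, θ k < 0 → θ (k + 1) > 0 := by
    intro k hk hk'
    have hb := key k hk hk'
    rw [hrec k, if_pos hk']
    nlinarith
  exact ⟨main n le_rfl hneg, main⟩
end

section
/- Let μ, ε, η be real numbers with η > 0, μ > 0, and ε > μ, and let θ : ℕ → ℝ satisfy the recurrence θ(k+1) = θ(k) + η(μ+ε) if θ(k) < 0, θ(k+1) = θ(k) + ημ if θ(k) = 0, and θ(k+1) = θ(k) + η(μ−ε) if θ(k) > 0. Suppose n₀ < n are indices with θ(n₀) > 0, θ(n) < 0, and θ(m) ≥ 0 for all m with n₀ ≤ m < n. Then for every k ≥ n with θ(k) < 0 it holds that θ(k) > η(μ−ε). -/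
/-- Inductive invariant for Proposition 2: after the first crossing from positive
to negative, every subsequent negative value is bounded below by `η(μ - ε)`. -/
theorem neg_values_lower_bound (μ ε η : ℝ) (hη : 0 < η) (hμ : 0 < μ) (hεμ : μ < ε)
    (θ : ℕ → ℝ)
    (hrec : ∀ k, θ (k + 1) =
      if θ k < 0 then θ k + η * (μ + ε)
      else if θ k = 0 then θ k + η * μ
      else θ k + η * (μ - ε))
    (n₀ n : ℕ) (hn₀n : n₀ < n) (hpos : θ n₀ > 0) (hneg : θ n < 0)
    (hmin : ∀ m, n₀ ≤ m → m < n → θ m ≥ 0) :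
    ∀ k ≥ n, θ k < 0 → θ k > η * (μ - ε) := by
  have key : ∀ k, n ≤ k → (θ k ≥ 0 ∨ θ k > η * (μ - ε)) := by
    intro k hk
    induction k, hk using Nat.le_induction with
    | base =>
      obtain ⟨m, rfl⟩ : ∃ m, n = m + 1 :=
        ⟨n - 1, by omega⟩
      have hm : θ m ≥ 0 := hmin m (Nat.le_of_lt_succ hn₀n) (Nat.lt_succ_self m)
      have h := hrec m
      rw [if_neg (not_lt.mpr hm)] at h
      rcases eq_or_lt_of_le hm with h0 | hp
      · rw [if_pos h0.symm, ← h0] at h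
        left; rw [h]; positivity
      · rw [if_neg (ne_of_gt hp)] at h
        right; rw [h]; nlinarith
    | succ k hk ih =>
      have h := hrec k
      rcases lt_trichotomy (θ k) 0 with hlt | heq | hgt
      · have hb : θ k > η * (μ - ε) := by
          rcases ih with h' | h'
          · linarith
          · exact h'
        rw [if_pos hlt] at h
        left; rw [h]; nlinarith
      · rw [if_neg (not_lt.mpr heq.ge), if_pos heq, heq] at h
        left; rw [h]; positivity
      · rw [if_neg (not_lt.mpr hgt.le), if_neg (ne_of_gt hgt)] at h
        right; rw [h]; nlinarith
  intro k hk hneg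
  rcases key k hk with h | h
  · linarith
  · exact h
end

section
/- Let η = 1/2, ε = 3/2, μ = 1, and let r be a real number with 0 < r < 1/4. Let θ : ℕ → ℝ satisfy θ(0) = r and the recurrence θ(k+1) = θ(k) + η(μ+ε) if θ(k) < 0, θ(k+1) = θ(k) + ημ if θ(k) = 0, and θ(k+1) = θ(k) + η(μ−ε) if θ(k) > 0. Then the first six terms are θ(0) = r, θ(1) = r − 1/4, θ(2) = r + 1, θ(3) = r + 3/4, θ(4) = r + 1/2, θ(5) = r + 1/4, the sequence is periodic with θ(k+6) = θ(k) for all k, and among any six consecutive terms exactly one (the one congruent to index 1 modulo 6) is negative. -/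
/-- The paper's worked example: with `η = 1/2`, `ε = 3/2`, `μ = 1`, and
`θ 0 = r` for `0 < r < 1/4`, the dynamics are 6-periodic, the first six terms are
`r, r - 1/4, r + 1, r + 3/4, r + 1/2, r + 1/4`, and a term is negative exactly
when its index is congruent to `1` modulo `6`. -/
theorem example_six_periodic (η ε μ r : ℝ) (hη : η = 1 / 2) (hε : ε = 3 / 2)
    (hμ : μ = 1) (hr : 0 < r) (hr' : r < 1 / 4)
    (θ : ℕ → ℝ) (h0 : θ 0 = r)
    (hrec : ∀ k, θ (k + 1) =
      if θ k < 0 then θ k + η * (μ + ε)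
      else if θ k = 0 then θ k + η * μ
      else θ k + η * (μ - ε)) :
    (θ 0 = r ∧ θ 1 = r - 1 / 4 ∧ θ 2 = r + 1 ∧ θ 3 = r + 3 / 4 ∧
      θ 4 = r + 1 / 2 ∧ θ 5 = r + 1 / 4) ∧
    (∀ k, θ (k + 6) = θ k) ∧
    (∀ k, θ k < 0 ↔ k % 6 = 1) := by
  subst hη hε hμ
  have hv : ∀ n, θ n =
      (if n % 6 = 0 then r else if n % 6 = 1 then r - 1/4 else if n % 6 = 2 then r + 1
        else if n % 6 = 3 then r + 3/4 else if n % 6 = 4 then r + 1/2 else r + 1/4) := by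
    intro n
    induction n with
    | zero => simpa using h0
    | succ n ih =>
      rw [hrec n, ih]
      have h6 : n % 6 = 0 ∨ n % 6 = 1 ∨ n % 6 = 2 ∨ n % 6 = 3 ∨ n % 6 = 4 ∨ n % 6 = 5 := by
        omega
      rcases h6 with h | h | h | h | h | h <;>
        · have h' : (n + 1) % 6 = (n % 6 + 1) % 6 := by omega
          simp only [h', h]
          norm_num
          split_ifs <;> first | linarith | norm_num
  refine ⟨⟨by simpa using hv 0, by simpa using hv 1, by simpa using hv 2,
    by simpa using hv 3, by simpa using hv 4, by simpa using hv 5⟩, ?_, ?_⟩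
  · intro k
    rw [hv (k + 6), hv k]
    have : (k + 6) % 6 = k % 6 := by omega
    rw [this]
  · intro k
    rw [hv k]
    split_ifs <;> constructor <;> intro h <;> first | linarith | omega | assumption
end
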